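/- Let R be a 1-normalized quadratic form on ℝ^{d+1}, i.e., R(x) = x₀x_d + R̃(x₁,…,x_{d-1}) for a quadratic form R̃. Let p ∈ ℝ^{d+1} with R(p) = 0 and |p₀| = ‖p‖_∞. Then for all t ≥ 0, ‖g_t p‖_∞ ≤ C·max( dist(p, L₁), ‖p‖/e^t, e^t·dist(p,L₁)²/‖p‖ ), where C depends only on ‖R̃‖, g_t = diag(e^{-t},1,…,1,e^t), L₁ = ℝe₀, and dist is sup-norm distance. Moreover the lower bound max(dist(p,L₁), ‖p‖/e^t) ≤ ‖g_t p‖ holds unconditionally. -/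

import Mathlib

/-- The diagonal flow g_t = diag(e^{-t}, 1, …, 1, e^t) on ℝ^{d+1}. -/
noncomputable def gdiag (d : ℕ) (t : ℝ) (x : Fin (d + 1) → ℝ) : Fin (d + 1) → ℝ :=
  fun i => if (i : ℕ) = 0 then Real.exp (-t) * x i
    else if (i : ℕ) = d then Real.exp t * x i else x i

/-- For a 1-normalized quadratic form R(x) = x₀x_d + R̃(x₁,…,x_{d-1}) with ‖R̃‖ ≤ CR,
and any p with R(p) = 0 and |p₀| = ‖p‖, one has the unconditional lower bound
max(dist(p,L₁), ‖p‖/e^t) ≤ ‖g_t p‖, and the upper bound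
‖g_t p‖ ≤ C·max(dist(p,L₁), ‖p‖/e^t, e^t·dist(p,L₁)²/‖p‖) with C depending only on CR.
Here dist(p, L₁) = max_{i ≥ 1} |p_i| is the sup-norm distance to L₁ = ℝe₀. -/
theorem stmt_12 (d : ℕ) (hd : 1 ≤ d) (CR : ℝ) (hCR : 0 ≤ CR) :
    (∀ (p : Fin (d + 1) → ℝ) (t : ℝ), 0 ≤ t →
      max ‖(fun i => if (i : ℕ) = 0 then 0 else p i : Fin (d + 1) → ℝ)‖ (‖p‖ / Real.exp t) ≤
        ‖gdiag d t p‖) ∧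
    ∃ C : ℝ, 0 < C ∧
      ∀ Rt : (Fin (d + 1) → ℝ) → ℝ,
        (∀ x y : Fin (d + 1) → ℝ,
            (∀ i : Fin (d + 1), (i : ℕ) ≠ 0 → (i : ℕ) ≠ d → x i = y i) → Rt x = Rt y) →
        (∀ x : Fin (d + 1) → ℝ,
            |Rt x| ≤ CR *
              ‖(fun i => if (i : ℕ) = 0 then 0 else if (i : ℕ) = d then 0 else x i :
                  Fin (d + 1) → ℝ)‖ ^ 2) →
        ∀ p : Fin (d + 1) → ℝ,
          p 0 * p (Fin.last d) + Rt p = 0 →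
          |p 0| = ‖p‖ →
          ∀ t : ℝ, 0 ≤ t →
            ‖gdiag d t p‖ ≤
              C * max
                (max ‖(fun i => if (i : ℕ) = 0 then 0 else p i : Fin (d + 1) → ℝ)‖
                  (‖p‖ / Real.exp t))
                (Real.exp t *
                    ‖(fun i => if (i : ℕ) = 0 then 0 else p i : Fin (d + 1) → ℝ)‖ ^ 2 / ‖p‖) := by
  have hexp : ∀ t : ℝ, 0 ≤ t → (1 : ℝ) ≤ Real.exp t := fun t ht => Real.one_le_exp ht
  constructor
  · -- lower bound
    intro p t ht
    have het : (0 : ℝ) < Real.exp t := Real.exp_pos t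
    apply max_le
    · -- ‖q‖ ≤ ‖g_t p‖
      rw [pi_norm_le_iff_of_nonneg (norm_nonneg _)]
      intro i
      by_cases h0 : (i : ℕ) = 0
      · simp [h0, norm_nonneg]
      · have h1 : ‖p i‖ ≤ ‖gdiag d t p i‖ := by
          unfold gdiag
          simp only [h0, if_false]
          by_cases hdd : (i : ℕ) = d
          · simp only [hdd, if_true]
            rw [Real.norm_eq_abs, Real.norm_eq_abs, abs_mul, Real.abs_exp]
            nlinarith [abs_nonneg (p i), hexp t ht]
          · simp [hdd]
        simp only [h0, if_false]
        exact h1.trans (norm_le_pi_norm _ i)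
    · -- ‖p‖/e^t ≤ ‖g_t p‖
      rw [div_le_iff₀ het]
      rw [pi_norm_le_iff_of_nonneg (by positivity)]
      intro i
      have h1 : ‖p i‖ ≤ Real.exp t * ‖gdiag d t p i‖ := by
        unfold gdiag
        by_cases h0 : (i : ℕ) = 0
        · simp only [h0, if_true]
          rw [Real.norm_eq_abs, Real.norm_eq_abs, abs_mul, Real.abs_exp,
            Real.exp_neg, ← mul_assoc, mul_inv_cancel₀ het.ne', one_mul]
        · simp only [h0, if_false]
          by_cases hdd : (i : ℕ) = d
          · simp only [hdd, if_true]
            rw [Real.norm_eq_abs, Real.norm_eq_abs, abs_mul, Real.abs_exp]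
            calc |p i| ≤ Real.exp t * |p i| :=
                  le_mul_of_one_le_left (abs_nonneg _) (hexp t ht)
              _ ≤ Real.exp t * (Real.exp t * |p i|) :=
                  le_mul_of_one_le_left (by positivity) (hexp t ht)
          · simp only [hdd, if_false]
            nlinarith [norm_nonneg (p i), hexp t ht]
      calc ‖p i‖ ≤ Real.exp t * ‖gdiag d t p i‖ := h1
        _ ≤ Real.exp t * ‖gdiag d t p‖ :=
            mul_le_mul_of_nonneg_left (norm_le_pi_norm _ i) het.le
        _ = ‖gdiag d t p‖ * Real.exp t := mul_comm _ _
  · refine ⟨CR + 1, by linarith, ?_⟩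
    intro Rt _ hbound p hR0 hp0 t ht
    have het : (0 : ℝ) < Real.exp t := Real.exp_pos t
    set q : Fin (d + 1) → ℝ := (fun i => if (i : ℕ) = 0 then 0 else p i) with hq
    set D : ℝ := ‖q‖ with hD
    set M : ℝ := max (max D (‖p‖ / Real.exp t)) (Real.exp t * D ^ 2 / ‖p‖) with hM
    have hDnn : 0 ≤ D := norm_nonneg _
    have hMnn : 0 ≤ M := le_trans hDnn ((le_max_left _ _).trans (le_max_left _ _))
    by_cases hp : ‖p‖ = 0
    · have hp' : p = 0 := norm_eq_zero.mp hp
      have : gdiag d t p = 0 := by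
        funext i; unfold gdiag; simp [hp']
      rw [this, norm_zero]
      positivity
    · have hpn : 0 < ‖p‖ := lt_of_le_of_ne (norm_nonneg _) (Ne.symm hp)
      -- bound on last coordinate
      have hmidleq : ‖(fun i => if (i : ℕ) = 0 then 0 else if (i : ℕ) = d then 0 else p i :
          Fin (d + 1) → ℝ)‖ ≤ D := by
        rw [pi_norm_le_iff_of_nonneg hDnn]
        intro i
        by_cases h0 : (i : ℕ) = 0
        · simp [h0, hDnn]
        · by_cases hdd : (i : ℕ) = d
          · simp [h0, hdd, hDnn]
          · simp only [h0, hdd, if_false]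
            have : ‖q i‖ ≤ D := norm_le_pi_norm q i
            have h0' : i ≠ 0 := fun h => h0 (by simp [h])
            simpa [hq, h0, h0'] using this
      have hRtle : |Rt p| ≤ CR * D ^ 2 := by
        calc |Rt p| ≤ CR * ‖(fun i => if (i : ℕ) = 0 then 0 else if (i : ℕ) = d then 0 else p i :
              Fin (d + 1) → ℝ)‖ ^ 2 := hbound p
          _ ≤ CR * D ^ 2 := by
              apply mul_le_mul_of_nonneg_left _ hCR
              exact pow_le_pow_left₀ (norm_nonneg _) hmidleq 2
      have hlast : |p (Fin.last d)| ≤ CR * D ^ 2 / ‖p‖ := by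
        rw [le_div_iff₀ hpn]
        have : |p 0 * p (Fin.last d)| = |Rt p| := by
          rw [show p 0 * p (Fin.last d) = -Rt p by linarith, abs_neg]
        rw [abs_mul, hp0, mul_comm] at this
        linarith
      rw [pi_norm_le_iff_of_nonneg (by positivity)]
      intro i
      unfold gdiag
      by_cases h0 : (i : ℕ) = 0
      · have hi0 : i = 0 := by ext; simpa using h0
        simp only [h0, if_true, hi0]
        rw [Real.norm_eq_abs, if_pos (by simp), abs_mul, Real.abs_exp, hp0, Real.exp_neg]
        have h1 : (Real.exp t)⁻¹ * ‖p‖ = ‖p‖ / Real.exp t := by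
          rw [div_eq_mul_inv, mul_comm]
        rw [h1]
        have h2 : ‖p‖ / Real.exp t ≤ M := (le_max_right _ _).trans (le_max_left _ _)
        nlinarith [div_nonneg hpn.le het.le]
      · simp only [h0, if_false]
        by_cases hdd : (i : ℕ) = d
        · have hid : i = Fin.last d := by ext; simpa using hdd
          simp only [hdd, if_true, hid]
          rw [Real.norm_eq_abs, if_pos (Fin.val_last d), abs_mul, Real.abs_exp]
          have h1 : Real.exp t * |p (Fin.last d)| ≤ Real.exp t * (CR * D ^ 2 / ‖p‖) :=
            mul_le_mul_of_nonneg_left hlast het.le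
          have h2 : Real.exp t * (CR * D ^ 2 / ‖p‖) = CR * (Real.exp t * D ^ 2 / ‖p‖) := by
            ring
          have h3 : Real.exp t * D ^ 2 / ‖p‖ ≤ M := le_max_right _ _
          nlinarith [mul_le_mul_of_nonneg_left h3 hCR, div_nonneg (mul_nonneg het.le (sq_nonneg D)) hpn.le]
        · simp only [hdd, if_false]
          have h1 : ‖p i‖ ≤ D := by
            have := norm_le_pi_norm q i
            have h0' : i ≠ 0 := fun h => h0 (by simp [h])
            simpa [hq, hD, h0, h0'] using this
          have h2 : D ≤ M := (le_max_left _ _).trans (le_max_left _ _)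
          rw [Real.norm_eq_abs] at h1 ⊢
          nlinarith [abs_nonneg (p i)]
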